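/- Let g ≥ 1 be an integer and let p be a prime with p > 2g + 1. Then there exists a prime ℓ ≥ 3 such that p does not divide (ℓ - 1) · ℓ^(g²) · ∏_{i=1}^{g} (ℓ^(2i) - 1). -/
import Mathlib

/-- For `g ≥ 1` and a prime `p > 2g + 1`, there exists a prime `ℓ ≥ 3`
such that `p` does not divide `(ℓ - 1) · ℓ^(g²) · ∏_{i=1}^{g} (ℓ^(2i) - 1)`
(the order of `GSp_{2g}(ℤ/ℓℤ)`). -/
theorem stmt0 (g p : ℕ) (hg : 1 ≤ g) (hp : p.Prime) (hpg : 2 * g + 1 < p) :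
    ∃ ℓ : ℕ, ℓ.Prime ∧ 3 ≤ ℓ ∧
      ¬ p ∣ (ℓ - 1) * ℓ ^ (g ^ 2) * ∏ i ∈ Finset.Icc 1 g, (ℓ ^ (2 * i) - 1) := by
  haveI : Fact p.Prime := ⟨hp⟩
  haveI : NeZero p := ⟨hp.ne_zero⟩
  obtain ⟨ζ, hζ⟩ := IsCyclic.exists_generator (α := (ZMod p)ˣ)
  have hord : orderOf ζ = p - 1 := by
    rw [orderOf_eq_card_of_forall_mem_zpowers hζ, Nat.card_eq_fintype_card, ZMod.card_units_eq_totient,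
      Nat.totient_prime hp]
  obtain ⟨ℓ, hℓ2, hℓp, hℓmod⟩ :=
    Nat.forall_exists_prime_gt_and_eq_mod (a := (ζ : ZMod p)) ζ.isUnit 2
  refine ⟨ℓ, hℓp, hℓ2, ?_⟩
  have hℓ1 : 1 ≤ ℓ := by omega
  intro hdvd
  rcases (Nat.Prime.dvd_mul hp).mp hdvd with h | h
  · rcases (Nat.Prime.dvd_mul hp).mp h with h | h
    · -- p ∣ ℓ - 1
      have : ((ℓ - 1 : ℕ) : ZMod p) = 0 := (ZMod.natCast_eq_zero_iff _ _).mpr h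
      rw [Nat.cast_sub hℓ1, hℓmod, Nat.cast_one, sub_eq_zero] at this
      have hζ1 : ζ = 1 := Units.ext this
      have : orderOf ζ = 1 := by rw [hζ1, orderOf_one]
      omega
    · -- p ∣ ℓ ^ g²
      have hpl : p ∣ ℓ := hp.dvd_of_dvd_pow h
      have : ((ℓ : ℕ) : ZMod p) = 0 := (ZMod.natCast_eq_zero_iff _ _).mpr hpl
      rw [hℓmod] at this
      exact (ζ.ne_zero) this
  · -- p ∣ ∏ (ℓ^(2i) - 1)
    obtain ⟨i, hi, hdvd⟩ := (Prime.dvd_finset_prod_iff hp.prime _).mp h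
    rw [Finset.mem_Icc] at hi
    have h1 : 1 ≤ ℓ ^ (2 * i) := Nat.one_le_pow _ _ (by omega)
    have : ((ℓ ^ (2 * i) - 1 : ℕ) : ZMod p) = 0 :=
      (ZMod.natCast_eq_zero_iff _ _).mpr hdvd
    rw [Nat.cast_sub h1, Nat.cast_pow, hℓmod, Nat.cast_one, sub_eq_zero] at this
    have hζpow : ζ ^ (2 * i) = 1 := by
      apply Units.ext
      push_cast
      exact this
    have hdvd2 : orderOf ζ ∣ 2 * i := orderOf_dvd_of_pow_eq_one hζpow
    have : p - 1 ≤ 2 * i := Nat.le_of_dvd (by omega) (hord ▸ hdvd2)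
    omega
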